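/- If m, n, Y, Z are integers satisfying m² = 2n² − 1 and (m² − 8)Y² = 1 + 8Z², then: m, n, Y are odd; 3 divides Y but 3 divides neither m, n, nor Z; 7 divides m; and every prime divisor of m² − 8 is congruent to 1 modulo 8. -/

import Mathlib

/-- If integers `m, n, Y, Z` satisfy `m² = 2n² - 1` and `(m² - 8)Y² = 1 + 8Z²`, then
`m`, `n`, `Y` are odd; `3 ∣ Y` but `3` divides none of `m`, `n`, `Z`; `7 ∣ m`; and
every prime divisor of `m² - 8` is congruent to `1` mod `8`. -/
theorem stmt14 (m n Y Z : ℤ)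
    (h1 : m ^ 2 = 2 * n ^ 2 - 1)
    (h2 : (m ^ 2 - 8) * Y ^ 2 = 1 + 8 * Z ^ 2) :
    Odd m ∧ Odd n ∧ Odd Y ∧ (3 ∣ Y) ∧ ¬ ((3 : ℤ) ∣ m) ∧ ¬ ((3 : ℤ) ∣ n) ∧
    ¬ ((3 : ℤ) ∣ Z) ∧ ((7 : ℤ) ∣ m) ∧
    ∀ p : ℕ, p.Prime → (p : ℤ) ∣ m ^ 2 - 8 → p % 8 = 1 := by
  have h1_2 : ((m : ZMod 2)) ^ 2 = 2 * (n : ZMod 2) ^ 2 - 1 := by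
    have := congrArg (fun z : ℤ => (z : ZMod 2)) h1
    push_cast at this; exact this
  have h1_4 : ((m : ZMod 4)) ^ 2 = 2 * (n : ZMod 4) ^ 2 - 1 := by
    have := congrArg (fun z : ℤ => (z : ZMod 4)) h1
    push_cast at this; exact this
  have h1_3 : ((m : ZMod 3)) ^ 2 = 2 * (n : ZMod 3) ^ 2 - 1 := by
    have := congrArg (fun z : ℤ => (z : ZMod 3)) h1
    push_cast at this; exact this
  have h2_2 : ((m : ZMod 2) ^ 2 - 8) * (Y : ZMod 2) ^ 2 = 1 + 8 * (Z : ZMod 2) ^ 2 := by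
    have := congrArg (fun z : ℤ => (z : ZMod 2)) h2
    push_cast at this; exact this
  have h2_3 : ((m : ZMod 3) ^ 2 - 8) * (Y : ZMod 3) ^ 2 = 1 + 8 * (Z : ZMod 3) ^ 2 := by
    have := congrArg (fun z : ℤ => (z : ZMod 3)) h2
    push_cast at this; exact this
  have h1_7 : ((m : ZMod 7)) ^ 2 = 2 * (n : ZMod 7) ^ 2 - 1 := by
    have := congrArg (fun z : ℤ => (z : ZMod 7)) h1
    push_cast at this; exact this
  have h2_7 : ((m : ZMod 7) ^ 2 - 8) * (Y : ZMod 7) ^ 2 = 1 + 8 * (Z : ZMod 7) ^ 2 := by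
    have := congrArg (fun z : ℤ => (z : ZMod 7)) h2
    push_cast at this; exact this
  have hm : Odd m := by
    rw [← Int.not_even_iff_odd, even_iff_two_dvd]
    intro h
    have h' : (m : ZMod 2) = 0 :=
      (ZMod.intCast_zmod_eq_zero_iff_dvd m 2).mpr (by exact_mod_cast h)
    revert h1_2 h'
    generalize (m : ZMod 2) = a; generalize (n : ZMod 2) = b
    revert a b; decide
  have hn : Odd n := by
    rw [← Int.not_even_iff_odd, even_iff_two_dvd]
    rintro ⟨t, ht⟩
    have h' : (n : ZMod 4) = 2 * (t : ZMod 4) := by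
      rw [ht]; push_cast; ring
    revert h1_4 h'
    generalize (m : ZMod 4) = a; generalize (n : ZMod 4) = b; generalize (t : ZMod 4) = c
    revert a b c; decide
  have hY : Odd Y := by
    rw [← Int.not_even_iff_odd, even_iff_two_dvd]
    intro h
    have h' : (Y : ZMod 2) = 0 :=
      (ZMod.intCast_zmod_eq_zero_iff_dvd Y 2).mpr (by exact_mod_cast h)
    revert h2_2 h'
    generalize (m : ZMod 2) = a; generalize (Y : ZMod 2) = y; generalize (Z : ZMod 2) = z
    revert a y z; decide
  have h3Y : (3 : ℤ) ∣ Y := by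
    have h' : (Y : ZMod 3) = 0 := by
      revert h1_3 h2_3
      generalize (m : ZMod 3) = a; generalize (n : ZMod 3) = b
      generalize (Y : ZMod 3) = y; generalize (Z : ZMod 3) = z
      revert a b y z; decide
    exact_mod_cast (ZMod.intCast_zmod_eq_zero_iff_dvd Y 3).mp h'
  have h3m : ¬ ((3 : ℤ) ∣ m) := by
    intro h
    have h' : (m : ZMod 3) = 0 :=
      (ZMod.intCast_zmod_eq_zero_iff_dvd m 3).mpr (by exact_mod_cast h)
    revert h1_3 h'
    generalize (m : ZMod 3) = a; generalize (n : ZMod 3) = b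
    revert a b; decide
  have h3n : ¬ ((3 : ℤ) ∣ n) := by
    intro h
    have h' : (n : ZMod 3) = 0 :=
      (ZMod.intCast_zmod_eq_zero_iff_dvd n 3).mpr (by exact_mod_cast h)
    revert h1_3 h'
    generalize (m : ZMod 3) = a; generalize (n : ZMod 3) = b
    revert a b; decide
  have h3Z : ¬ ((3 : ℤ) ∣ Z) := by
    intro h
    have h' : (Z : ZMod 3) = 0 :=
      (ZMod.intCast_zmod_eq_zero_iff_dvd Z 3).mpr (by exact_mod_cast h)
    revert h1_3 h2_3 h'
    generalize (m : ZMod 3) = a; generalize (n : ZMod 3) = b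
    generalize (Y : ZMod 3) = y; generalize (Z : ZMod 3) = z
    revert a b y z; decide
  have h7m : (7 : ℤ) ∣ m := by
    have h' : (m : ZMod 7) = 0 := by
      revert h1_7 h2_7
      generalize (m : ZMod 7) = a; generalize (n : ZMod 7) = b
      generalize (Y : ZMod 7) = y; generalize (Z : ZMod 7) = z
      revert a b y z; decide
    exact_mod_cast (ZMod.intCast_zmod_eq_zero_iff_dvd m 7).mp h'
  refine ⟨hm, hn, hY, h3Y, h3m, h3n, h3Z, h7m, ?_⟩
  intro p hp hpd
  haveI : Fact p.Prime := ⟨hp⟩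
  have hpZ : (p : ℤ) ∣ 1 + 8 * Z ^ 2 := h2 ▸ hpd.mul_right _
  have hp2 : p ≠ 2 := by
    rintro rfl
    have : Odd (m ^ 2 - 8) := by
      rcases hm with ⟨k, hk⟩
      exact ⟨2 * k ^ 2 + 2 * k - 4, by rw [hk]; ring⟩
    rw [← Int.not_even_iff_odd, even_iff_two_dvd] at this
    exact this (by exact_mod_cast hpd)
  have hm8 : (m : ZMod p) ^ 2 = 8 := by
    have h' : ((m ^ 2 - 8 : ℤ) : ZMod p) = 0 :=
      (ZMod.intCast_zmod_eq_zero_iff_dvd _ p).mpr hpd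
    push_cast at h'
    linear_combination h'
  have hz : (1 : ZMod p) + 8 * (Z : ZMod p) ^ 2 = 0 := by
    have h' : ((1 + 8 * Z ^ 2 : ℤ) : ZMod p) = 0 :=
      (ZMod.intCast_zmod_eq_zero_iff_dvd _ p).mpr hpZ
    push_cast at h'
    exact h'
  have h2ne : (2 : ZMod p) ≠ 0 := by
    intro h
    have : ((2 : ℕ) : ZMod p) = 0 := by exact_mod_cast h
    rw [ZMod.natCast_eq_zero_iff] at this
    exact hp2 ((Nat.prime_dvd_prime_iff_eq hp Nat.prime_two).mp this)
  have hsq2 : IsSquare (2 : ZMod p) := by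
    refine ⟨(m : ZMod p) * 2⁻¹, ?_⟩
    field_simp
    linear_combination -hm8
  have hsqn2 : IsSquare (-2 : ZMod p) := by
    refine ⟨4 * (Z : ZMod p), ?_⟩
    linear_combination -2 * hz
  have H2 := (ZMod.exists_sq_eq_two_iff hp2).mp hsq2
  have Hn2 := (ZMod.exists_sq_eq_neg_two_iff hp2).mp hsqn2
  omega
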